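/- Let π be a set of primes, let G be a finite π-separable group, and let H be a subgroup of G such that the index |G:H| is a π-number (all its prime divisors lie in π). Then O_π(H) is contained in O_π(G). -/

import Mathlib

/-- `n` is a `π`-number: every prime divisor of `n` lies in `π`. -/
def IsPiNumber (π : Set ℕ) (n : ℕ) : Prop := ∀ p : ℕ, p.Prime → p ∣ n → p ∈ π

/-- A group `G` is `π`-separable if it has a normal series whose factors are `π`-groups or
`π'`-groups.  The order of the factor `s (i+1) / s i` is the relative index
`(s i.castSucc).relIndex (s i.succ)`. -/
def IsPiSeparable (π : Set ℕ) (G : Type*) [Group G] : Prop :=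
  ∃ (n : ℕ) (s : Fin (n + 1) → Subgroup G),
    Monotone s ∧ s 0 = ⊥ ∧ s (Fin.last n) = ⊤ ∧ (∀ i, (s i).Normal) ∧
    ∀ i : Fin n,
      IsPiNumber π ((s i.castSucc).relIndex (s i.succ)) ∨
      IsPiNumber πᶜ ((s i.castSucc).relIndex (s i.succ))

/-- `O_π(X)`: the largest normal `π`-subgroup of a finite group `X`
(defined as the join of all normal `π`-subgroups). -/
def piRadical (π : Set ℕ) (X : Type*) [Group X] : Subgroup X :=
  sSup {N : Subgroup X | N.Normal ∧ IsPiNumber π (Nat.card N)}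

namespace PiAux

variable {π : Set ℕ}

lemma isPiNumber_one : IsPiNumber π 1 := fun p hp hd => absurd (Nat.eq_one_of_dvd_one hd ▸ hp) Nat.not_prime_one

lemma IsPiNumber.of_dvd {m n : ℕ} (h : IsPiNumber π n) (hd : m ∣ n) : IsPiNumber π m :=
  fun p hp hpd => h p hp (hpd.trans hd)

lemma IsPiNumber.mul {a b : ℕ} (ha : IsPiNumber π a) (hb : IsPiNumber π b) :
    IsPiNumber π (a * b) := by
  intro p hp hd
  rcases (Nat.Prime.dvd_mul hp).mp hd with h | h
  · exact ha p hp h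
  · exact hb p hp h

lemma coprime_pi_pi' {a b : ℕ} (ha : IsPiNumber π a) (hb : IsPiNumber πᶜ b) :
    Nat.Coprime a b := by
  by_contra hcop
  obtain ⟨p, hp, hpd⟩ := Nat.exists_prime_and_dvd hcop
  exact hb p hp (hpd.trans (Nat.gcd_dvd_right a b)) (ha p hp (hpd.trans (Nat.gcd_dvd_left a b)))

lemma eq_one_pi_pi' {a : ℕ} (ha : IsPiNumber π a) (hb : IsPiNumber πᶜ a) : a = 1 :=
  by
  have := coprime_pi_pi' ha hb
  rwa [Nat.Coprime, Nat.gcd_self] at this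

end PiAux

namespace PiAux

open Subgroup

variable {X : Type*} [Group X]

lemma card_sup_dvd [Finite X] (A B : Subgroup X) (hB : B.Normal) :
    Nat.card (A ⊔ B : Subgroup X) ∣ Nat.card A * Nat.card B := by
  haveI := hB
  have h1 : Nat.card (A ⊔ B : Subgroup X)
      = Nat.card ((A ⊔ B : Subgroup X) ⧸ B.subgroupOf (A ⊔ B)) * Nat.card (B.subgroupOf (A ⊔ B)) :=
    card_eq_card_quotient_mul_card_subgroup _
  have h2 : Nat.card ((A ⊔ B : Subgroup X) ⧸ B.subgroupOf (A ⊔ B))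
      = Nat.card (A ⧸ B.subgroupOf A) :=
    (Nat.card_congr (QuotientGroup.quotientInfEquivProdNormalQuotient A B).toEquiv).symm
  have h3 : Nat.card (B.subgroupOf (A ⊔ B)) = Nat.card B :=
    Nat.card_congr (Subgroup.subgroupOfEquivOfLe (le_sup_right : B ≤ A ⊔ B)).toEquiv
  rw [h1, h2, h3]
  exact Nat.mul_dvd_mul (card_quotient_dvd_card _) dvd_rfl

lemma piRadical_mem (π : Set ℕ) (X : Type*) [Group X] [Finite X] :
    (piRadical π X).Normal ∧ IsPiNumber π (Nat.card (piRadical π X)) := by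
  classical
  set S : Set (Subgroup X) := {N : Subgroup X | N.Normal ∧ IsPiNumber π (Nat.card N)} with hS
  have hfin : S.Finite := Set.toFinite _
  have key : ∀ t : Finset (Subgroup X), ↑t ⊆ S → t.sup id ∈ S := by
    intro t
    induction t using Finset.induction_on with
    | empty =>
      intro _
      rw [Finset.sup_empty]
      refine ⟨inferInstance, ?_⟩
      have : Nat.card (⊥ : Subgroup X) = 1 := by simp
      rw [this]; exact isPiNumber_one
    | insert a t' hx ih =>
      intro hsub
      have ha : a ∈ S := hsub (Finset.mem_insert_self a t')
      have ht' : ↑t' ⊆ S := fun y hy => hsub (Finset.mem_insert_of_mem hy)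
      have hs := ih ht'
      rw [Finset.sup_insert]
      haveI h1 := ha.1
      haveI h2 := hs.1
      refine ⟨(by exact Subgroup.sup_normal a (t'.sup id) : (a ⊔ t'.sup id).Normal), ?_⟩
      exact IsPiNumber.of_dvd (IsPiNumber.mul ha.2 hs.2) (card_sup_dvd a (t'.sup id) hs.1)
  have hrw : piRadical π X = hfin.toFinset.sup id := by
    rw [Finset.sup_id_eq_sSup, hfin.coe_toFinset]
    rfl
  rw [hrw]
  exact key _ (by rw [hfin.coe_toFinset])

lemma le_piRadical {K : Subgroup X} (h1 : K.Normal) (h2 : IsPiNumber π (Nat.card K)) :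
    K ≤ piRadical π X :=
  le_sSup ⟨h1, h2⟩

lemma card_map_dvd (K : Subgroup X) {Y : Type*} [Group Y] (f : X →* Y) [Finite X] :
    Nat.card (K.map f) ∣ Nat.card K := by
  have h1 : (f.comp K.subtype).range = K.map f := by
    rw [MonoidHom.range_comp, Subgroup.range_subtype]
  have h2 : Nat.card (K ⧸ (f.comp K.subtype).ker) = Nat.card (f.comp K.subtype).range :=
    Nat.card_congr (QuotientGroup.quotientKerEquivRange _).toEquiv
  rw [← h1, ← h2]
  exact card_quotient_dvd_card _

end PiAux

namespace PiAux

open Subgroup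

variable {G : Type*} [Group G]

lemma relindex_map_dvd {G' : Type*} [Group G'] (f : G →* G') (hf : Function.Surjective f)
    {A B : Subgroup G} (hAB : A ≤ B) :
    (A.map f).relIndex (B.map f) ∣ A.relIndex B := by
  have hsurj : Function.Surjective (f.subgroupMap B) := f.subgroupMap_surjective B
  have h1 : ((A.map f).subgroupOf (B.map f)).comap (f.subgroupMap B)
      = (((A.map f).subgroupOf (B.map f)).comap (f.subgroupMap B)) := rfl
  have hle : A.subgroupOf B ≤ ((A.map f).subgroupOf (B.map f)).comap (f.subgroupMap B) := by
    intro x hx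
    simp only [Subgroup.mem_comap, Subgroup.mem_subgroupOf] at hx ⊢
    exact ⟨x, hx, rfl⟩
  have h2 : (((A.map f).subgroupOf (B.map f)).comap (f.subgroupMap B)).index
      = ((A.map f).subgroupOf (B.map f)).index :=
    Subgroup.index_comap_of_surjective _ hsurj
  calc (A.map f).relIndex (B.map f)
      = ((A.map f).subgroupOf (B.map f)).index := rfl
    _ = (((A.map f).subgroupOf (B.map f)).comap (f.subgroupMap B)).index := h2.symm
    _ ∣ (A.subgroupOf B).index := Subgroup.index_dvd_of_le hle
    _ = A.relIndex B := rfl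

lemma isPiSeparable_quotient {π : Set ℕ} [Finite G] (h : IsPiSeparable π G)
    (N : Subgroup G) [N.Normal] : IsPiSeparable π (G ⧸ N) := by
  obtain ⟨n, s, hmono, h0, hlast, hnorm, hfac⟩ := h
  refine ⟨n, fun j => (s j).map (QuotientGroup.mk' N), ?_, ?_, ?_, ?_, ?_⟩
  · exact fun a b hab => Subgroup.map_mono (hmono hab)
  · show (s 0).map (QuotientGroup.mk' N) = ⊥
    rw [h0, Subgroup.map_bot]
  · show (s (Fin.last n)).map (QuotientGroup.mk' N) = ⊤
    rw [hlast, Subgroup.map_top_of_surjective _ (QuotientGroup.mk'_surjective N)]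
  · intro i
    exact (hnorm i).map _ (QuotientGroup.mk'_surjective N)
  · intro i
    have hd := relindex_map_dvd (QuotientGroup.mk' N) (QuotientGroup.mk'_surjective N)
      (hmono (Fin.castSucc_le_succ i))
    rcases hfac i with hc | hc
    · exact Or.inl (IsPiNumber.of_dvd hc hd)
    · exact Or.inr (IsPiNumber.of_dvd hc hd)

lemma relindex_dvd_index_right [Finite G] (H N : Subgroup G) (hN : N.Normal) :
    H.relIndex N ∣ H.index := by
  haveI := hN
  have e1 : (H ⊓ N).relIndex N * N.relIndex (H ⊔ N) = (H ⊓ N).relIndex (H ⊔ N) :=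
    Subgroup.relIndex_mul_relIndex _ _ _ inf_le_right le_sup_right
  have e2 : (H ⊓ N).relIndex H * H.relIndex (H ⊔ N) = (H ⊓ N).relIndex (H ⊔ N) :=
    Subgroup.relIndex_mul_relIndex _ _ _ inf_le_left le_sup_left
  have e3 : N.relIndex (H ⊔ N) = (H ⊓ N).relIndex H := by
    rw [Subgroup.relIndex_sup_right, ← Subgroup.inf_relIndex_left]
  have hne : (H ⊓ N).relIndex H ≠ 0 := by
    have : Finite (H ⧸ (H ⊓ N).subgroupOf H) := inferInstance
    exact Subgroup.index_ne_zero_of_finite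
  have e4 : (H ⊓ N).relIndex N = H.relIndex (H ⊔ N) := by
    apply Nat.eq_of_mul_eq_mul_right (Nat.pos_of_ne_zero hne)
    rw [← e3, e1, ← e2, e3, mul_comm]
  rw [← Subgroup.inf_relIndex_right H N, e4]
  exact Subgroup.relIndex_dvd_index_of_le le_sup_left

end PiAux

namespace PiAux

open Subgroup

lemma orderOf_conj' {G : Type*} [Group G] (g x : G) : orderOf (g * x * g⁻¹) = orderOf x := by
  have := orderOf_injective (MulAut.conj g).toMonoidHom (MulAut.conj g).injective x
  simpa [MulAut.conj] using this

universe u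

lemma key (π : Set ℕ) : ∀ (k : ℕ) (G : Type u) [Group G] [Finite G],
    Nat.card G ≤ k → IsPiSeparable π G →
    ∀ H P : Subgroup G, P ≤ H → (∀ h ∈ H, ∀ p ∈ P, h * p * h⁻¹ ∈ P) →
    IsPiNumber π (Nat.card P) → IsPiNumber π H.index →
    P ≤ piRadical π G := by
  intro k
  induction k with
  | zero =>
    intro G _ _ hcard _ _ _ _ _ _ _
    have : Nonempty G := ⟨1⟩
    have := Nat.card_pos (α := G)
    omega
  | succ k ih =>
    intro G _ _ hcard hsep H P hPH hconj hPcard hHidx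
    by_cases htriv : (⊤ : Subgroup G) = ⊥
    · exact le_trans (le_trans le_top htriv.le) bot_le
    obtain ⟨n, s, hmono, h0, hlast, hnormal, hfac⟩ := id hsep
    have hex : ∃ i : Fin n, s i.castSucc = ⊥ ∧ s i.succ ≠ ⊥ := by
      by_contra hno
      push_neg at hno
      have hall : ∀ j : Fin (n + 1), s j = ⊥ := by
        intro j
        induction j using Fin.induction with
        | zero => exact h0
        | succ i ihj => exact hno i ihj
      exact htriv (hlast ▸ hall (Fin.last n))
    obtain ⟨i, hib, hisucc⟩ := hex
    set N := s i.succ with hNdef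
    haveI hNnormal : N.Normal := hnormal i.succ
    have hNcard : IsPiNumber π (Nat.card N) ∨ IsPiNumber πᶜ (Nat.card N) := by
      have := hfac i
      rwa [hib, Subgroup.relIndex_bot_left] at this
    set mk : G →* G ⧸ N := QuotientGroup.mk' N with hmkdef
    have hmk : Function.Surjective mk := QuotientGroup.mk'_surjective N
    have hsepQ : IsPiSeparable π (G ⧸ N) := isPiSeparable_quotient hsep N
    have hQcard : Nat.card (G ⧸ N) ≤ k := by
      have h1 : Nat.card G = Nat.card (G ⧸ N) * Nat.card N :=
        Subgroup.card_eq_card_quotient_mul_card_subgroup N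
      have h2 : 1 < Nat.card N := (Subgroup.one_lt_card_iff_ne_bot _).mpr hisucc
      have : Nonempty (G ⧸ N) := ⟨(1 : G ⧸ N)⟩
      have h3 : 0 < Nat.card (G ⧸ N) := Nat.card_pos
      have h4 : Nat.card (G ⧸ N) * 2 ≤ Nat.card G := by
        rw [h1]; exact Nat.mul_le_mul_left _ h2
      omega
    have hres : P.map mk ≤ piRadical π (G ⧸ N) := by
      refine ih (G ⧸ N) hQcard hsepQ (H.map mk) (P.map mk) (Subgroup.map_mono hPH) ?_ ?_ ?_
      · rintro h' ⟨h, hh, rfl⟩ p' ⟨p, hp, rfl⟩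
        exact ⟨h * p * h⁻¹, hconj h hh p hp, by simp⟩
      · exact IsPiNumber.of_dvd hPcard (card_map_dvd P mk)
      · exact IsPiNumber.of_dvd hHidx (H.index_map_dvd hmk)
    set R := piRadical π (G ⧸ N) with hRdef
    have hRmem := piRadical_mem π (G ⧸ N)
    set M := R.comap mk with hMdef
    have hPM : P ≤ M := Subgroup.map_le_iff_le_comap.mp hres
    haveI hMnormal : M.Normal := hRmem.1.comap mk
    have hNM : N ≤ M := by
      intro x hx
      have hx1 : mk x = 1 := by
        have : x ∈ mk.ker := by rw [hmkdef, QuotientGroup.ker_mk']; exact hx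
        exact this
      show mk x ∈ R
      rw [hx1]; exact one_mem R
    have hcardM : Nat.card M = Nat.card N * Nat.card R := by
      set φ : M →* G ⧸ N := mk.comp M.subtype with hφdef
      have hkerφ : φ.ker = N.subgroupOf M := by
        rw [hφdef, ← MonoidHom.comap_ker, hmkdef, QuotientGroup.ker_mk']; rfl
      have hrangeφ : φ.range = R := by
        rw [hφdef, MonoidHom.range_comp, Subgroup.range_subtype, hMdef,
          Subgroup.map_comap_eq_self_of_surjective hmk]
      have h1 : Nat.card M = Nat.card (M ⧸ φ.ker) * Nat.card φ.ker :=
        Subgroup.card_eq_card_quotient_mul_card_subgroup _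
      have h2 : Nat.card (M ⧸ φ.ker) = Nat.card φ.range :=
        Nat.card_congr (QuotientGroup.quotientKerEquivRange φ).toEquiv
      have h3 : Nat.card φ.ker = Nat.card N := by
        rw [hkerφ]
        exact Nat.card_congr (Subgroup.subgroupOfEquivOfLe hNM).toEquiv
      rw [h1, h2, h3, hrangeφ, mul_comm]
    rcases hNcard with hNpi | hNpi'
    · -- N is a π-group
      have hMpi : IsPiNumber π (Nat.card M) := by
        rw [hcardM]; exact IsPiNumber.mul hNpi hRmem.2
      exact le_trans hPM (le_piRadical hMnormal hMpi)
    · -- N is a π'-group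
      have hrel1 : H.relIndex N ∣ H.index := relindex_dvd_index_right H N hNnormal
      have hrel2 : H.relIndex N ∣ Nat.card N := Subgroup.index_dvd_card _
      have hNH : N ≤ H := Subgroup.relIndex_eq_one.mp
        (eq_one_pi_pi' (IsPiNumber.of_dvd hHidx hrel1) (IsPiNumber.of_dvd hNpi' hrel2))
      have hPbotN : P ⊓ N = ⊥ := by
        apply Subgroup.card_eq_one.mp
        exact eq_one_pi_pi'
          (IsPiNumber.of_dvd hPcard (Subgroup.card_dvd_of_le inf_le_left))
          (IsPiNumber.of_dvd hNpi' (Subgroup.card_dvd_of_le inf_le_right))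
      have hcomm : ∀ p ∈ P, ∀ x ∈ N, p * x = x * p := by
        intro p hp x hx
        have hc1 : p * x * p⁻¹ * x⁻¹ ∈ N := mul_mem (hNnormal.conj_mem x hx p) (inv_mem hx)
        have hc2 : p * x * p⁻¹ * x⁻¹ ∈ P := by
          have h5 : x * p⁻¹ * x⁻¹ ∈ P := hconj x (hNH hx) p⁻¹ (inv_mem hp)
          have h6 : p * (x * p⁻¹ * x⁻¹) ∈ P := mul_mem hp h5
          convert h6 using 1
          group
        have hmem : p * x * p⁻¹ * x⁻¹ ∈ P ⊓ N := ⟨hc2, hc1⟩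
        rw [hPbotN, Subgroup.mem_bot] at hmem
        have h7 : p * x * p⁻¹ = x := by
          have h8 := mul_eq_one_iff_eq_inv.mp hmem
          simpa using h8
        calc p * x = p * x * p⁻¹ * p := by group
          _ = x * p := by rw [h7]
      set Cz := Subgroup.centralizer (N : Set G) with hCzdef
      have hCznormal : Cz.Normal := by
        constructor
        intro c hc g
        rw [Subgroup.mem_centralizer_iff] at hc ⊢
        intro h hh
        have hh' : g⁻¹ * h * g ∈ N := by
          have := hNnormal.conj_mem h hh g⁻¹
          simpa [mul_assoc] using this
        have h9 := hc _ hh'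
        calc h * (g * c * g⁻¹) = g * (g⁻¹ * h * g * c) * g⁻¹ := by group
          _ = g * (c * (g⁻¹ * h * g)) * g⁻¹ := by rw [h9]
          _ = g * c * g⁻¹ * h := by group
      set C := M ⊓ Cz with hCdef
      haveI hCnormal : C.Normal :=
        ⟨fun x hx g => ⟨hMnormal.conj_mem x hx.1 g, hCznormal.conj_mem x hx.2 g⟩⟩
      have hPC : P ≤ C := le_inf hPM
        (fun p hp => Subgroup.mem_centralizer_iff.mpr (fun x hx => (hcomm p hp x hx).symm))
      set Z : Subgroup C := N.subgroupOf C with hZdef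
      have hCcent : ∀ (c : C) (x : G), x ∈ N → x * (c : G) = (c : G) * x := by
        intro c x hx
        exact Subgroup.mem_centralizer_iff.mp c.2.2 x hx
      haveI hZnormal : Z.Normal := by
        constructor
        intro z hz c
        rw [hZdef, Subgroup.mem_subgroupOf] at hz ⊢
        have hcz : ((c * z * c⁻¹ : C) : G) = (z : G) := by
          push_cast
          have := hCcent c (z : G) hz
          rw [← this]
          group
        rw [hcz]; exact hz
      have hZcard : IsPiNumber πᶜ (Nat.card Z) :=
        IsPiNumber.of_dvd hNpi'
          (Subgroup.card_comap_dvd_of_injective N C.subtype C.subtype_injective)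
      set ψ : C →* G ⧸ N := mk.comp C.subtype with hψdef
      have hkerψ : ψ.ker = Z := by
        rw [hψdef, ← MonoidHom.comap_ker, hmkdef, QuotientGroup.ker_mk']; rfl
      have hrangeψ : ψ.range ≤ R := by
        rw [hψdef, MonoidHom.range_comp, Subgroup.range_subtype]
        exact Subgroup.map_le_iff_le_comap.mpr inf_le_left
      have hZindex : IsPiNumber π Z.index := by
        have h1 : Z.index = Nat.card (C ⧸ Z) := Subgroup.index_eq_card Z
        have h2 : Nat.card (C ⧸ ψ.ker) = Nat.card ψ.range :=
          Nat.card_congr (QuotientGroup.quotientKerEquivRange ψ).toEquiv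
        rw [h1, ← hkerψ, h2]
        exact IsPiNumber.of_dvd hRmem.2 (Subgroup.card_dvd_of_le hrangeψ)
      have hcop : Nat.Coprime (Nat.card Z) Z.index :=
        (coprime_pi_pi' hZindex hZcard).symm
      obtain ⟨K, hK⟩ := Subgroup.exists_right_complement'_of_coprime hcop
      have hKcard : IsPiNumber π (Nat.card K) := by
        have h10 := hK.symm.index_eq_card
        rw [← h10]; exact hZindex
      set K₀ := K.map C.subtype with hK0def
      have hK0card : IsPiNumber π (Nat.card K₀) :=
        IsPiNumber.of_dvd hKcard (card_map_dvd K C.subtype)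
      have hmemK0 : ∀ x : G, x ∈ C → IsPiNumber π (orderOf x) → x ∈ K₀ := by
        intro x hxC hord
        obtain ⟨⟨z, kk⟩, hzk, -⟩ := hK.existsUnique (⟨x, hxC⟩ : C)
        have hzZ : (z : C) ∈ Z := SetLike.mem_coe.mp z.2
        have hkK : (kk : C) ∈ K := SetLike.mem_coe.mp kk.2
        have hzN : ((z : C) : G) ∈ N := Subgroup.mem_subgroupOf.mp hzZ
        have hcommzk : Commute (z : C) (kk : C) := by
          apply Subtype.ext
          push_cast
          exact hCcent (kk : C) _ hzN
        have hordz : orderOf (z : C) ∣ Nat.card Z := Subgroup.orderOf_dvd_natCard Z hzZ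
        have hordk : orderOf (kk : C) ∣ Nat.card K := Subgroup.orderOf_dvd_natCard K hkK
        have hco : Nat.Coprime (orderOf (z : C)) (orderOf (kk : C)) :=
          (coprime_pi_pi' (IsPiNumber.of_dvd hKcard hordk)
            (IsPiNumber.of_dvd hZcard hordz)).symm
        have hordmul : orderOf ((z : C) * (kk : C)) = orderOf (z : C) * orderOf (kk : C) :=
          hcommzk.orderOf_mul_eq_mul_orderOf_of_coprime hco
        have hx1 : orderOf ((z : C) * (kk : C)) = orderOf x := by
          rw [hzk]; exact Subgroup.orderOf_mk x hxC
        have hdvd : orderOf (z : C) ∣ orderOf x := by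
          rw [← hx1, hordmul]; exact dvd_mul_right _ _
        have hz1 : orderOf (z : C) = 1 :=
          eq_one_pi_pi' (IsPiNumber.of_dvd hord hdvd) (IsPiNumber.of_dvd hZcard hordz)
        have hz2 : (z : C) = 1 := orderOf_eq_one_iff.mp hz1
        have hxk : (⟨x, hxC⟩ : C) = (kk : C) := by rw [← hzk, hz2, one_mul]
        exact ⟨(kk : C), hkK, by rw [← hxk]; rfl⟩

      have hK0mem : ∀ x ∈ K₀, x ∈ C ∧ IsPiNumber π (orderOf x) := by
        rintro x ⟨kk, hkk, rfl⟩
        refine ⟨kk.2, ?_⟩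
        have h11 : orderOf (C.subtype kk) = orderOf kk := Subgroup.orderOf_coe kk
        rw [h11]
        exact IsPiNumber.of_dvd hKcard (Subgroup.orderOf_dvd_natCard K hkk)
      have hK0normal : K₀.Normal := by
        constructor
        intro x hx g
        obtain ⟨hxC, hxord⟩ := hK0mem x hx
        apply hmemK0
        · exact hCnormal.conj_mem x hxC g
        · rw [orderOf_conj' g x]; exact hxord
      have hK0rad : K₀ ≤ piRadical π G := le_piRadical hK0normal hK0card
      refine le_trans ?_ hK0rad
      intro p hp
      exact hmemK0 p (hPC hp) (IsPiNumber.of_dvd hPcard (Subgroup.orderOf_dvd_natCard P hp))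

end PiAux

/-- **Lemma 1.** Let `G` be a finite `π`-separable group and `H` a subgroup of `G` whose index
`|G : H|` is a `π`-number.  Then `O_π(H) ≤ O_π(G)` (where `O_π(H)` is regarded as a subgroup
of `G` via the inclusion `H ↪ G`). -/
theorem piRadical_le_of_index_piNumber
    {G : Type*} [Group G] [Finite G] (π : Set ℕ)
    (hG : IsPiSeparable π G)
    (H : Subgroup G) (hidx : IsPiNumber π H.index) :
    (piRadical π H).map H.subtype ≤ piRadical π G := by
  have hradH := PiAux.piRadical_mem π H
  refine PiAux.key π (Nat.card G) G le_rfl hG H ((piRadical π H).map H.subtype)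
    (Subgroup.map_subtype_le _) ?_ ?_ hidx
  · rintro h hh p ⟨r, hr, rfl⟩
    refine ⟨(⟨h, hh⟩ : H) * r * (⟨h, hh⟩ : H)⁻¹, hradH.1.conj_mem r hr ⟨h, hh⟩, ?_⟩
    simp
  · exact PiAux.IsPiNumber.of_dvd hradH.2 (PiAux.card_map_dvd _ _)
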